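/- In the braid group B₄, with x = bac, d = (ac)⁻¹b(ac), e = a⁻¹ba, f = c⁻¹bc, conjugation by x permutes these elements as follows: x a x⁻¹ = e, x e x⁻¹ = c, x c x⁻¹ = f, x f x⁻¹ = a, x b x⁻¹ = d, and x d x⁻¹ = b. -/

import Mathlib

/-- Relators for the braid group `B₄ = ⟨a, b, c | aba = bab, bcb = cbc, ac = ca⟩`,
with generators indexed `0 ↦ a`, `1 ↦ b`, `2 ↦ c`. -/
def braidRels : Set (FreeGroup (Fin 3)) :=
  { FreeGroup.of 0 * FreeGroup.of 1 * FreeGroup.of 0 *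
      (FreeGroup.of 1 * FreeGroup.of 0 * FreeGroup.of 1)⁻¹,
    FreeGroup.of 1 * FreeGroup.of 2 * FreeGroup.of 1 *
      (FreeGroup.of 2 * FreeGroup.of 1 * FreeGroup.of 2)⁻¹,
    FreeGroup.of 0 * FreeGroup.of 2 * (FreeGroup.of 2 * FreeGroup.of 0)⁻¹ }

/-- The braid group on four strands. -/
abbrev B4 := PresentedGroup braidRels

namespace B4

def a : B4 := PresentedGroup.of 0
def b : B4 := PresentedGroup.of 1
def c : B4 := PresentedGroup.of 2
def d : B4 := (a * c)⁻¹ * b * (a * c)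
def e : B4 := a⁻¹ * b * a
def f : B4 := c⁻¹ * b * c
def x : B4 := b * a * c

end B4

open B4

lemma rel_of_mem {r : FreeGroup (Fin 3)} (h : r ∈ braidRels) :
    (QuotientGroup.mk r : B4) = 1 :=
  (QuotientGroup.eq_one_iff r).2 (Subgroup.subset_normalClosure h)

lemma haba : a * b * a = b * a * b := by
  have h := rel_of_mem (r := FreeGroup.of 0 * FreeGroup.of 1 * FreeGroup.of 0 *
      (FreeGroup.of 1 * FreeGroup.of 0 * FreeGroup.of 1)⁻¹) (by left; rfl)
  have h2 : (a * b * a) * (b * a * b)⁻¹ = 1 := by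
    simpa [a, b, PresentedGroup.of, QuotientGroup.mk_mul, QuotientGroup.mk_inv, map_mul, map_inv] using
      (show PresentedGroup.mk braidRels _ = 1 from h)
  exact mul_inv_eq_one.mp h2

lemma hbcb : b * c * b = c * b * c := by
  have h := rel_of_mem (r := FreeGroup.of 1 * FreeGroup.of 2 * FreeGroup.of 1 *
      (FreeGroup.of 2 * FreeGroup.of 1 * FreeGroup.of 2)⁻¹) (by right; left; rfl)
  have h2 : (b * c * b) * (c * b * c)⁻¹ = 1 := by
    simpa [b, c, PresentedGroup.of, QuotientGroup.mk_mul, QuotientGroup.mk_inv, map_mul, map_inv] using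
      (show PresentedGroup.mk braidRels _ = 1 from h)
  exact mul_inv_eq_one.mp h2

lemma hac : a * c = c * a := by
  have h := rel_of_mem (r := FreeGroup.of 0 * FreeGroup.of 2 *
      (FreeGroup.of 2 * FreeGroup.of 0)⁻¹) (by right; right; rfl)
  have h2 : (a * c) * (c * a)⁻¹ = 1 := by
    simpa [a, c, PresentedGroup.of, QuotientGroup.mk_mul, QuotientGroup.mk_inv, map_mul, map_inv] using
      (show PresentedGroup.mk braidRels _ = 1 from h)
  exact mul_inv_eq_one.mp h2

/-- From a braid relation `p q p = q p q`, get `p q p⁻¹ = q⁻¹ p q`. -/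
lemma braid_conj {G : Type*} [Group G] {p q : G} (h : p * q * p = q * p * q) :
    p * q * p⁻¹ = q⁻¹ * p * q := by
  calc p * q * p⁻¹ = q⁻¹ * (q * p * q) * (q⁻¹ * q * p⁻¹) := by group
    _ = q⁻¹ * (p * q * p) * (q⁻¹ * q * p⁻¹) := by rw [h]
    _ = q⁻¹ * p * q := by group

theorem statement2 :
    x * a * x⁻¹ = e ∧ x * e * x⁻¹ = c ∧ x * c * x⁻¹ = f ∧
    x * f * x⁻¹ = a ∧ x * b * x⁻¹ = d ∧ x * d * x⁻¹ = b := by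
  have hcm : Commute a c := hac
  have hac' : a * c⁻¹ = c⁻¹ * a := hcm.inv_right
  have hca' : c * a⁻¹ = a⁻¹ * c := hcm.inv_left.symm
  have hii : a⁻¹ * c⁻¹ = c⁻¹ * a⁻¹ := hcm.inv_left.inv_right
  have hbab : b * a * b⁻¹ = a⁻¹ * b * a := braid_conj haba.symm
  have hcbc : c * b * c⁻¹ = b⁻¹ * c * b := braid_conj hbcb.symm
  have hbcb' : b * c * b⁻¹ = c⁻¹ * b * c := braid_conj hbcb
  have hbab' : b * a⁻¹ * b⁻¹ = a⁻¹ * b⁻¹ * a := by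
    calc b * a⁻¹ * b⁻¹ = (b * a * b⁻¹)⁻¹ := by group
      _ = (a⁻¹ * b * a)⁻¹ := by rw [hbab]
      _ = a⁻¹ * b⁻¹ * a := by group
  refine ⟨?_, ?_, ?_, ?_, ?_, ?_⟩
  · show b * a * c * a * (b * a * c)⁻¹ = e
    calc b * a * c * a * (b * a * c)⁻¹
        = b * a * (c * a) * c⁻¹ * a⁻¹ * b⁻¹ := by group
      _ = b * a * (a * c) * c⁻¹ * a⁻¹ * b⁻¹ := by rw [← hac]
      _ = b * a * b⁻¹ := by group
      _ = a⁻¹ * b * a := hbab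
      _ = e := rfl
  · show b * a * c * (a⁻¹ * b * a) * (b * a * c)⁻¹ = c
    calc b * a * c * (a⁻¹ * b * a) * (b * a * c)⁻¹
        = b * a * (c * a⁻¹) * b * a * c⁻¹ * a⁻¹ * b⁻¹ := by group
      _ = b * a * (a⁻¹ * c) * b * a * c⁻¹ * a⁻¹ * b⁻¹ := by rw [hca']
      _ = b * c * b * (a * c⁻¹) * a⁻¹ * b⁻¹ := by group
      _ = b * c * b * (c⁻¹ * a) * a⁻¹ * b⁻¹ := by rw [hac']
      _ = (b * c * b) * c⁻¹ * b⁻¹ := by group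
      _ = (c * b * c) * c⁻¹ * b⁻¹ := by rw [hbcb]
      _ = c := by group
  · show b * a * c * c * (b * a * c)⁻¹ = f
    calc b * a * c * c * (b * a * c)⁻¹
        = b * (a * c) * c * c⁻¹ * a⁻¹ * b⁻¹ := by group
      _ = b * (c * a) * c * c⁻¹ * a⁻¹ * b⁻¹ := by rw [hac]
      _ = b * c * b⁻¹ := by group
      _ = c⁻¹ * b * c := hbcb'
      _ = f := rfl
  · show b * a * c * (c⁻¹ * b * c) * (b * a * c)⁻¹ = a
    calc b * a * c * (c⁻¹ * b * c) * (b * a * c)⁻¹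
        = (b * a * b) * a⁻¹ * b⁻¹ := by group
      _ = (a * b * a) * a⁻¹ * b⁻¹ := by rw [haba]
      _ = a := by group
  · show b * a * c * b * (b * a * c)⁻¹ = d
    calc b * a * c * b * (b * a * c)⁻¹
        = b * a * (c * b * c⁻¹) * a⁻¹ * b⁻¹ := by group
      _ = b * a * (b⁻¹ * c * b) * a⁻¹ * b⁻¹ := by rw [hcbc]
      _ = (b * a * b⁻¹) * c * (b * a⁻¹ * b⁻¹) := by group
      _ = (a⁻¹ * b * a) * c * (a⁻¹ * b⁻¹ * a) := by rw [hbab, hbab']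
      _ = a⁻¹ * b * (a * c) * a⁻¹ * b⁻¹ * a := by group
      _ = a⁻¹ * b * (c * a) * a⁻¹ * b⁻¹ * a := by rw [hac]
      _ = a⁻¹ * (b * c * b⁻¹) * a := by group
      _ = a⁻¹ * (c⁻¹ * b * c) * a := by rw [hbcb']
      _ = (a⁻¹ * c⁻¹) * b * (c * a) := by group
      _ = (c⁻¹ * a⁻¹) * b * (c * a) := by rw [hii]
      _ = (c⁻¹ * a⁻¹) * b * (a * c) := by rw [hac]
      _ = (a * c)⁻¹ * b * (a * c) := by rw [← mul_inv_rev]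
      _ = d := rfl
  · show b * a * c * ((a * c)⁻¹ * b * (a * c)) * (b * a * c)⁻¹ = b
    group
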